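/- arXiv:1406.0165 — 4 statements merged into one kernel-verified Lean document; each statement's English description precedes it below -/
import Mathlib

section
/- For any p in R^3 and unit vector ω, with p_0 = √(1+|p|²) and p̂ = p/p_0, one has p_0(1 + p̂·ω) ≥ (1 + |p×ω|²)/(2p_0), and consequently |p̂×ω|² ≤ 2(1 + p̂·ω). -/
open RealInnerProductSpace

noncomputable def cross3 (a b : EuclideanSpace ℝ (Fin 3)) : EuclideanSpace ℝ (Fin 3) :=
  WithLp.toLp 2 ![a 1 * b 2 - a 2 * b 1, a 2 * b 0 - a 0 * b 2, a 0 * b 1 - a 1 * b 0]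

lemma norm_sq_eq3 (x : EuclideanSpace ℝ (Fin 3)) :
    ‖x‖ ^ 2 = x 0 ^ 2 + x 1 ^ 2 + x 2 ^ 2 := by
  rw [EuclideanSpace.norm_eq, Real.sq_sqrt (by positivity)]
  simp [Fin.sum_univ_three, sq_abs]

lemma inner_eq3 (x y : EuclideanSpace ℝ (Fin 3)) :
    ⟪x, y⟫ = x 0 * y 0 + x 1 * y 1 + x 2 * y 2 := by
  simp [PiLp.inner_apply, Fin.sum_univ_three, mul_comm]

theorem stmt2 (p ω : EuclideanSpace ℝ (Fin 3)) (hω : ‖ω‖ = 1)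
    (p0 : ℝ) (hp0 : p0 = Real.sqrt (1 + ‖p‖ ^ 2))
    (phat : EuclideanSpace ℝ (Fin 3)) (hphat : phat = p0⁻¹ • p) :
    p0 * (1 + ⟪phat, ω⟫) ≥ (1 + ‖cross3 p ω‖ ^ 2) / (2 * p0) ∧
      ‖cross3 phat ω‖ ^ 2 ≤ 2 * (1 + ⟪phat, ω⟫) := by
  have hnp : ‖p‖ ^ 2 = p 0 ^ 2 + p 1 ^ 2 + p 2 ^ 2 := norm_sq_eq3 p
  have hp0pos : 0 < p0 := by
    rw [hp0]; apply Real.sqrt_pos.2; positivity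
  have hsum : p 0 ^ 2 + p 1 ^ 2 + p 2 ^ 2 = p0 ^ 2 - 1 := by
    rw [hp0, Real.sq_sqrt (by positivity), hnp]; ring
  have hω2 : ω 0 ^ 2 + ω 1 ^ 2 + ω 2 ^ 2 = 1 := by
    rw [← norm_sq_eq3, hω]; norm_num
  have hph : ∀ i, phat i = p0⁻¹ * p i := by
    intro i; rw [hphat]; rfl
  have hcp : ∀ a b : EuclideanSpace ℝ (Fin 3),
      ‖cross3 a b‖ ^ 2 = (a 1 * b 2 - a 2 * b 1) ^ 2 + (a 2 * b 0 - a 0 * b 2) ^ 2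
        + (a 0 * b 1 - a 1 * b 0) ^ 2 := by
    intro a b
    rw [norm_sq_eq3]
    simp [cross3]
  set s : ℝ := p 0 * ω 0 + p 1 * ω 1 + p 2 * ω 2 with hs
  have hinner : ⟪phat, ω⟫ = p0⁻¹ * s := by
    rw [inner_eq3, hph, hph, hph]; ring
  have hlag : ‖cross3 p ω‖ ^ 2 = p0 ^ 2 - 1 - s ^ 2 := by
    rw [hcp, hs]
    linear_combination (p 0 ^ 2 + p 1 ^ 2 + p 2 ^ 2) * hω2 + hsum
  have hne : p0 ≠ 0 := hp0pos.ne'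
  constructor
  · rw [hinner, hlag, ge_iff_le, div_le_iff₀ (by positivity)]
    have e1 : p0 * (1 + p0⁻¹ * s) * (2 * p0) = 2 * p0 ^ 2 + 2 * (p0 * p0⁻¹) * (p0 * s) := by
      ring
    rw [e1, mul_inv_cancel₀ hne]
    nlinarith [sq_nonneg (p0 + s)]
  · rw [hinner, hcp, hph, hph, hph]
    have e2 : (p0⁻¹ * p 1 * ω 2 - p0⁻¹ * p 2 * ω 1) ^ 2
        + (p0⁻¹ * p 2 * ω 0 - p0⁻¹ * p 0 * ω 2) ^ 2
        + (p0⁻¹ * p 0 * ω 1 - p0⁻¹ * p 1 * ω 0) ^ 2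
        = p0⁻¹ ^ 2 * ((p 0 ^ 2 + p 1 ^ 2 + p 2 ^ 2) * (ω 0 ^ 2 + ω 1 ^ 2 + ω 2 ^ 2) - s ^ 2) := by
      ring
    rw [e2, hsum, hω2, mul_one]
    have e3 : 2 * (1 + p0⁻¹ * s) - p0⁻¹ ^ 2 * (p0 ^ 2 - 1 - s ^ 2)
        = ((p0 + s) ^ 2 + 1) / p0 ^ 2 := by
      field_simp
      ring
    linarith [e3, div_nonneg (by positivity : (0:ℝ) ≤ (p0 + s) ^ 2 + 1) (by positivity : (0:ℝ) ≤ p0 ^ 2)]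
end

section
/- For vectors E, B, p̂, ω in R^3 with |ω| = 1 and |p̂| ≤ 1, one has |ω × (E + p̂×B)| ≤ |ω×E + B| + (1 + p̂·ω)|B| + |ω·B|. -/
open RealInnerProductSpace

theorem stmt7 (E B ω phat : EuclideanSpace ℝ (Fin 3)) (hω : ‖ω‖ = 1)
    (hphat : ‖phat‖ ≤ 1) :
    ‖cross3 ω (E + cross3 phat B)‖ ≤
      ‖cross3 ω E + B‖ + (1 + ⟪phat, ω⟫) * ‖B‖ + |⟪ω, B⟫| := by
  have hip : |⟪phat, ω⟫| ≤ 1 := by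
    calc |⟪phat, ω⟫| ≤ ‖phat‖ * ‖ω‖ := abs_real_inner_le_norm _ _
    _ ≤ 1 := by rw [hω]; simpa using hphat
  have hpos : (0:ℝ) ≤ 1 + ⟪phat, ω⟫ := by nlinarith [abs_le.mp hip]
  have key : cross3 ω (E + cross3 phat B) =
      (cross3 ω E + B) + (-(1 + ⟪phat, ω⟫)) • B + ⟪ω, B⟫ • phat := by
    ext i
    have h1 : ⟪phat, ω⟫ = phat 0 * ω 0 + phat 1 * ω 1 + phat 2 * ω 2 := by
      simp [PiLp.inner_apply, RCLike.inner_apply, Fin.sum_univ_three]; ring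
    have h2 : ⟪ω, B⟫ = ω 0 * B 0 + ω 1 * B 1 + ω 2 * B 2 := by
      simp [PiLp.inner_apply, RCLike.inner_apply, Fin.sum_univ_three]; ring
    fin_cases i <;>
      simp [cross3, h1, h2, PiLp.add_apply, PiLp.smul_apply, smul_eq_mul] <;> ring
  rw [key]
  calc ‖(cross3 ω E + B) + (-(1 + ⟪phat, ω⟫)) • B + ⟪ω, B⟫ • phat‖
      ≤ ‖(cross3 ω E + B) + (-(1 + ⟪phat, ω⟫)) • B‖ + ‖⟪ω, B⟫ • phat‖ :=
        norm_add_le _ _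
    _ ≤ (‖cross3 ω E + B‖ + ‖(-(1 + ⟪phat, ω⟫)) • B‖) + ‖⟪ω, B⟫ • phat‖ := by
        gcongr; exact norm_add_le _ _
    _ ≤ ‖cross3 ω E + B‖ + (1 + ⟪phat, ω⟫) * ‖B‖ + |⟪ω, B⟫| := by
        rw [norm_smul, norm_smul]
        gcongr
        · rw [Real.norm_eq_abs, abs_neg, abs_of_nonneg hpos]
        · calc ‖⟪ω, B⟫‖ * ‖phat‖ ≤ ‖⟪ω, B⟫‖ * 1 := by gcongr
            _ = |⟪ω, B⟫| := by simp [Real.norm_eq_abs]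
end

section
/- There exists a constant C such that for vectors E, B in R^3, a unit vector ω in R^3, and p̂ = p/√(1+|p|²) for some p in R^3, the Lorentz force satisfies |E + p̂×B| ≤ C(|E·ω| + |B·ω| + |B + ω×E| + (1 + p̂·ω)^{1/2}|B|). -/
open RealInnerProductSpace

lemma cross3_apply0 (a b : EuclideanSpace ℝ (Fin 3)) :
    cross3 a b 0 = a 1 * b 2 - a 2 * b 1 := rfl

lemma cross3_apply1 (a b : EuclideanSpace ℝ (Fin 3)) :
    cross3 a b 1 = a 2 * b 0 - a 0 * b 2 := rfl

lemma cross3_apply2 (a b : EuclideanSpace ℝ (Fin 3)) :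
    cross3 a b 2 = a 0 * b 1 - a 1 * b 0 := rfl

lemma cross3_norm_le (a b : EuclideanSpace ℝ (Fin 3)) :
    ‖cross3 a b‖ ≤ ‖a‖ * ‖b‖ := by
  have h1 : ‖cross3 a b‖ ^ 2 ≤ (‖a‖ * ‖b‖) ^ 2 := by
    rw [norm_sq_eq3, mul_pow, norm_sq_eq3, norm_sq_eq3,
      cross3_apply0, cross3_apply1, cross3_apply2]
    nlinarith [sq_nonneg (a 0 * b 0 + a 1 * b 1 + a 2 * b 2)]
  calc ‖cross3 a b‖ = Real.sqrt (‖cross3 a b‖ ^ 2) := (Real.sqrt_sq (norm_nonneg _)).symm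
  _ ≤ Real.sqrt ((‖a‖ * ‖b‖) ^ 2) := Real.sqrt_le_sqrt h1
  _ = ‖a‖ * ‖b‖ := Real.sqrt_sq (by positivity)

lemma key_identity (E B ω phat : EuclideanSpace ℝ (Fin 3)) (hω : ‖ω‖ = 1) :
    E + cross3 phat B =
      ⟪E, ω⟫ • ω + (-(cross3 ω (B + cross3 ω E)) + cross3 (ω + phat) B) := by
  have hω2 : ω 0 ^ 2 + ω 1 ^ 2 + ω 2 ^ 2 = 1 := by
    rw [← norm_sq_eq3, hω]; norm_num
  ext i
  fin_cases i <;>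
    simp [PiLp.inner_apply, Fin.sum_univ_three, cross3, PiLp.add_apply, PiLp.neg_apply,
      PiLp.smul_apply] <;>
    [linear_combination (-E 0) * hω2; linear_combination (-E 1) * hω2; linear_combination (-E 2) * hω2]

theorem stmt8 :
    ∃ C > 0, ∀ (E B ω p : EuclideanSpace ℝ (Fin 3)), ‖ω‖ = 1 →
      ∀ phat : EuclideanSpace ℝ (Fin 3), phat = (Real.sqrt (1 + ‖p‖ ^ 2))⁻¹ • p →
        ‖E + cross3 phat B‖ ≤
          C * (|⟪E, ω⟫| + |⟪B, ω⟫| + ‖B + cross3 ω E‖ +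
            Real.sqrt (1 + ⟪phat, ω⟫) * ‖B‖) := by
  refine ⟨2, by norm_num, ?_⟩
  intro E B ω p hω phat hphat
  -- phat has norm at most 1
  have hs : Real.sqrt (1 + ‖p‖ ^ 2) > 0 := Real.sqrt_pos.2 (by positivity)
  have hphat_norm : ‖phat‖ ≤ 1 := by
    rw [hphat, norm_smul, Real.norm_eq_abs, abs_of_pos (by positivity)]
    rw [inv_mul_le_one₀ hs]  -- ‖p‖ ≤ √(1+‖p‖²)
    calc ‖p‖ = Real.sqrt (‖p‖ ^ 2) := by rw [Real.sqrt_sq (norm_nonneg p)]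
    _ ≤ Real.sqrt (1 + ‖p‖ ^ 2) := Real.sqrt_le_sqrt (by linarith)
  have hip : |⟪phat, ω⟫| ≤ 1 := by
    calc |⟪phat, ω⟫| ≤ ‖phat‖ * ‖ω‖ := abs_real_inner_le_norm _ _
    _ ≤ 1 := by rw [hω]; simpa using hphat_norm
  have hnn : (0:ℝ) ≤ 1 + ⟪phat, ω⟫ := by
    have := abs_le.1 hip; linarith [this.1]
  -- bound on ‖ω + phat‖
  have hsum : ‖ω + phat‖ ≤ Real.sqrt 2 * Real.sqrt (1 + ⟪phat, ω⟫) := by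
    rw [← Real.sqrt_mul (by norm_num)]
    have h2 : ‖ω + phat‖ ^ 2 ≤ 2 * (1 + ⟪phat, ω⟫) := by
      have hexp : ‖ω + phat‖ ^ 2 = ‖ω‖ ^ 2 + 2 * ⟪ω, phat⟫ + ‖phat‖ ^ 2 := by
        rw [← real_inner_self_eq_norm_sq, ← real_inner_self_eq_norm_sq,
          ← real_inner_self_eq_norm_sq, inner_add_add_self, real_inner_comm phat ω]
        ring
      rw [hexp, hω, real_inner_comm ω phat]
      nlinarith [norm_nonneg phat]
    calc ‖ω + phat‖ = Real.sqrt (‖ω + phat‖ ^ 2) := by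
          rw [Real.sqrt_sq (norm_nonneg _)]
    _ ≤ Real.sqrt (2 * (1 + ⟪phat, ω⟫)) := Real.sqrt_le_sqrt h2
  -- main bound
  have hid := key_identity E B ω phat hω
  have hb : ‖E + cross3 phat B‖ ≤
      |⟪E, ω⟫| + ‖B + cross3 ω E‖ + Real.sqrt 2 * Real.sqrt (1 + ⟪phat, ω⟫) * ‖B‖ := by
    rw [hid]
    have t1 : ‖(⟪E, ω⟫ : ℝ) • ω‖ = |⟪E, ω⟫| := by
      rw [norm_smul, Real.norm_eq_abs, hω, mul_one]
    have t2 : ‖cross3 ω (B + cross3 ω E)‖ ≤ ‖B + cross3 ω E‖ := by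
      calc ‖cross3 ω (B + cross3 ω E)‖ ≤ ‖ω‖ * ‖B + cross3 ω E‖ := cross3_norm_le _ _
      _ = ‖B + cross3 ω E‖ := by rw [hω, one_mul]
    have t3 : ‖cross3 (ω + phat) B‖ ≤ Real.sqrt 2 * Real.sqrt (1 + ⟪phat, ω⟫) * ‖B‖ := by
      calc ‖cross3 (ω + phat) B‖ ≤ ‖ω + phat‖ * ‖B‖ := cross3_norm_le _ _
      _ ≤ Real.sqrt 2 * Real.sqrt (1 + ⟪phat, ω⟫) * ‖B‖ :=
          mul_le_mul_of_nonneg_right hsum (norm_nonneg _)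
    calc ‖⟪E, ω⟫ • ω + (-(cross3 ω (B + cross3 ω E)) + cross3 (ω + phat) B)‖
        ≤ ‖⟪E, ω⟫ • ω‖ + (‖-(cross3 ω (B + cross3 ω E))‖ + ‖cross3 (ω + phat) B‖) := by
          refine (norm_add_le _ _).trans ?_
          gcongr
          exact norm_add_le _ _
    _ = |⟪E, ω⟫| + (‖cross3 ω (B + cross3 ω E)‖ + ‖cross3 (ω + phat) B‖) := by
          rw [t1, norm_neg]
    _ ≤ |⟪E, ω⟫| + ‖B + cross3 ω E‖ + Real.sqrt 2 * Real.sqrt (1 + ⟪phat, ω⟫) * ‖B‖ := by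
          linarith
  have hsqrt2 : Real.sqrt 2 ≤ 2 := by
    nlinarith [Real.sq_sqrt (by norm_num : (0:ℝ) ≤ 2), Real.sqrt_nonneg 2]
  have hB : (0:ℝ) ≤ ‖B‖ := norm_nonneg _
  have hS : (0:ℝ) ≤ Real.sqrt (1 + ⟪phat, ω⟫) := Real.sqrt_nonneg _
  nlinarith [abs_nonneg (⟪E, ω⟫ : ℝ), abs_nonneg (⟪B, ω⟫ : ℝ),
    norm_nonneg (B + cross3 ω E), mul_le_mul_of_nonneg_right hsqrt2 (mul_nonneg hS hB)]
end

section
/- Gronwall-type bootstrap with double exponential: let g : [0,T] → [0,∞) be integrable, C₁ > 0 a constant, and h : [0,T) → [1,∞) a continuous function satisfying h(t) ≤ C₁ + C₁ ∫₀^t g(s) h(s) log h(s) ds for all t ∈ [0,T). Then there exists a constant Δ₀ > 0 depending only on C₁ such that h(t) ≤ 2C₁ exp(exp(Δ₀ ∫₀^t g(s) ds)) for all t ∈ [0,T). -/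
open MeasureTheory Set

noncomputable def dl15 (C₁ : ℝ) (k : ℕ) : ℝ := 1 / (4 * C₁ * Real.log (2 ^ (k + 2) * C₁))
noncomputable def Sm15 (C₁ : ℝ) (n : ℕ) : ℝ := ∑ k ∈ Finset.range n, dl15 C₁ k

lemma log_pow_pos (C₁ : ℝ) (hC₁ : 1 ≤ C₁) (k : ℕ) : 0 < Real.log (2 ^ (k + 2) * C₁) := by
  apply Real.log_pos
  have h2 : (2:ℝ) ≤ 2 ^ (k+2) := le_self_pow₀ (by norm_num) (by omega)
  nlinarith

lemma dl15_pos (C₁ : ℝ) (hC₁ : 1 ≤ C₁) (k : ℕ) : 0 < dl15 C₁ k := by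
  have h0 : (0:ℝ) < C₁ := by linarith
  have := log_pow_pos C₁ hC₁ k
  unfold dl15
  positivity

lemma Sm15_mono (C₁ : ℝ) (hC₁ : 1 ≤ C₁) : Monotone (Sm15 C₁) := by
  apply monotone_nat_of_le_succ
  intro n
  unfold Sm15
  rw [Finset.sum_range_succ]
  have := dl15_pos C₁ hC₁ n
  linarith

lemma Sm15_lb (C₁ : ℝ) (hC₁ : 1 ≤ C₁) (n : ℕ) :
    (Real.log (n + 2) - Real.log 2) / (4 * C₁ * Real.log (2 * C₁)) ≤ Sm15 C₁ n := by
  have hC0 : (0:ℝ) < C₁ := by linarith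
  set c := 4 * C₁ * Real.log (2 * C₁) with hc
  have hL : 0 < Real.log (2 * C₁) := Real.log_pos (by linarith)
  have hcpos : 0 < c := by positivity
  set f : ℕ → ℝ := fun k => Real.log ((k:ℝ) + 2) with hf
  have key : ∀ k : ℕ, (f (k+1) - f k) / c ≤ dl15 C₁ k := by
    intro k
    have hk2 : (0:ℝ) < (k:ℝ) + 2 := by positivity
    have h1 : f (k+1) - f k ≤ 1 / ((k:ℝ) + 2) := by
      have hlog := Real.log_le_sub_one_of_pos (x := ((k:ℝ)+3)/((k:ℝ)+2)) (by positivity)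
      rw [Real.log_div (by positivity) (by positivity)] at hlog
      have heq : ((k:ℝ)+3)/((k:ℝ)+2) - 1 = 1/((k:ℝ)+2) := by field_simp; ring
      have : f (k+1) = Real.log ((k:ℝ)+3) := by rw [hf]; push_cast; ring_nf
      rw [this, hf]
      simp only []
      linarith
    have hlogC : 0 ≤ Real.log C₁ := Real.log_nonneg hC₁
    have hlog2 : 0 < Real.log 2 := Real.log_pos (by norm_num)
    have h2 : 4 * C₁ * Real.log (2 ^ (k + 2) * C₁) ≤ c * ((k:ℝ) + 2) := by
      have e1 : Real.log (2 ^ (k + 2) * C₁) = ((k:ℝ)+2) * Real.log 2 + Real.log C₁ := by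
        rw [Real.log_mul (by positivity) (by positivity), Real.log_pow]
        push_cast; ring
      have e2 : Real.log (2 * C₁) = Real.log 2 + Real.log C₁ := by
        rw [Real.log_mul (by norm_num) (by positivity)]
      rw [e1, hc, e2]
      have hk0 : (0:ℝ) ≤ (k:ℝ) := Nat.cast_nonneg k
      nlinarith [mul_nonneg (mul_nonneg hC0.le hlogC) hk0]
    have hpos : 0 < 4 * C₁ * Real.log (2 ^ (k + 2) * C₁) := by
      have := log_pow_pos C₁ hC₁ k; positivity
    have : dl15 C₁ k = 1 / (4 * C₁ * Real.log (2 ^ (k + 2) * C₁)) := rfl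
    rw [this]
    calc (f (k+1) - f k) / c ≤ (1 / ((k:ℝ)+2)) / c := by gcongr
      _ = 1 / (c * ((k:ℝ)+2)) := by field_simp
      _ ≤ 1 / (4 * C₁ * Real.log (2 ^ (k + 2) * C₁)) := one_div_le_one_div_of_le hpos h2
  have tele : ∑ k ∈ Finset.range n, (f (k+1) - f k) = f n - f 0 := Finset.sum_range_sub f n
  calc (Real.log ((n:ℝ) + 2) - Real.log 2) / c = (f n - f 0) / c := by
        rw [hf]; norm_num
    _ = ∑ k ∈ Finset.range n, (f (k+1) - f k) / c := by rw [← Finset.sum_div, tele]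
    _ ≤ Sm15 C₁ n := Finset.sum_le_sum (fun k _ => key k)

lemma Sm15_nonneg (C₁ : ℝ) (hC₁ : 1 ≤ C₁) (n : ℕ) : 0 ≤ Sm15 C₁ n :=
  Finset.sum_nonneg fun k _ => (dl15_pos C₁ hC₁ k).le


lemma key15 (C₁ T : ℝ) (hC₁ : 1 ≤ C₁) (g h : ℝ → ℝ)
    (hg0 : ∀ s ∈ Icc 0 T, 0 ≤ g s)
    (hgint : IntegrableOn g (Icc 0 T))
    (hhc : ContinuousOn h (Ico 0 T))
    (hh1 : ∀ t ∈ Ico 0 T, 1 ≤ h t)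
    (hineq : ∀ t ∈ Ico 0 T, h t ≤ C₁ + C₁ * ∫ s in (0:ℝ)..t, g s * h s * Real.log (h s)) :
    ∀ n, ∀ t ∈ Ico 0 T, (∫ s in (0:ℝ)..t, g s) ≤ Sm15 C₁ n →
      C₁ + C₁ * (∫ s in (0:ℝ)..t, g s * h s * Real.log (h s)) ≤ 2 ^ (n + 1) * C₁ := by
  have hC0 : (0:ℝ) < C₁ := by linarith
  set G : ℝ → ℝ := fun s => g s * h s * Real.log (h s) with hGdef
  set Φ : ℝ → ℝ := fun u => C₁ + C₁ * ∫ s in (0:ℝ)..u, G s with hΦdef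
  set μf : ℝ → ℝ := fun u => ∫ s in (0:ℝ)..u, g s with hμdef
  -- integrability of G on compact subintervals
  have hGint : ∀ t, 0 ≤ t → t < T → IntegrableOn G (Icc 0 t) := by
    intro t ht0 htT
    have hsub : Icc 0 t ⊆ Ico 0 T := fun x hx => ⟨hx.1, lt_of_le_of_lt hx.2 htT⟩
    have hwc : ContinuousOn (fun s => h s * Real.log (h s)) (Icc 0 t) := by
      have h1 : ContinuousOn h (Icc 0 t) := hhc.mono hsub
      exact h1.mul (h1.log (fun x hx => by
        have := hh1 x (hsub hx); linarith))
    obtain ⟨M, hM⟩ := isCompact_Icc.exists_bound_of_continuousOn hwc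
    have hgi : IntegrableOn g (Icc 0 t) := hgint.mono_set (Icc_subset_Icc le_rfl htT.le)
    have hmeas : AEStronglyMeasurable (fun s => h s * Real.log (h s))
        (volume.restrict (Icc 0 t)) := hwc.aestronglyMeasurable measurableSet_Icc
    have hbdd : ∀ᵐ x ∂(volume.restrict (Icc 0 t)),
        ‖h x * Real.log (h x)‖ ≤ M := ae_restrict_of_forall_mem measurableSet_Icc hM
    have h2 := hgi.bdd_mul hmeas hbdd
    have heq : (fun x => h x * Real.log (h x) * g x) = G := by
      funext x; simp only [hGdef]; ring
    rw [heq] at h2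
    exact h2
  have hGII : ∀ a b, 0 ≤ a → a ≤ b → b < T → IntervalIntegrable G volume a b := by
    intro a b ha hab hbT
    apply IntegrableOn.intervalIntegrable
    rw [uIcc_of_le hab]
    exact (hGint b (le_trans ha hab) hbT).mono_set (Icc_subset_Icc ha le_rfl)
  have hgII : ∀ a b, 0 ≤ a → a ≤ b → b ≤ T → IntervalIntegrable g volume a b := by
    intro a b ha hab hbT
    apply IntegrableOn.intervalIntegrable
    rw [uIcc_of_le hab]
    exact hgint.mono_set (Icc_subset_Icc ha hbT)
  have hG0 : ∀ s, 0 ≤ s → s < T → 0 ≤ G s := by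
    intro s hs0 hsT
    have h1 := hh1 s ⟨hs0, hsT⟩
    have h2 := hg0 s ⟨hs0, hsT.le⟩
    have h3 : 0 ≤ Real.log (h s) := Real.log_nonneg h1
    simp only [hGdef]
    positivity
  -- splitting identities
  have hΦsplit : ∀ a b, 0 ≤ a → a ≤ b → b < T →
      Φ b = Φ a + C₁ * ∫ s in a..b, G s := by
    intro a b ha hab hbT
    have := intervalIntegral.integral_add_adjacent_intervals
      (hGII 0 a le_rfl ha (lt_of_le_of_lt hab hbT)) (hGII a b ha hab hbT)
    simp only [hΦdef]
    rw [← this]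
    ring
  have hμsplit : ∀ a b, 0 ≤ a → a ≤ b → b < T →
      μf b = μf a + ∫ s in a..b, g s := by
    intro a b ha hab hbT
    have := intervalIntegral.integral_add_adjacent_intervals
      (hgII 0 a le_rfl ha (le_trans hab hbT.le)) (hgII a b ha hab hbT.le)
    simp only [hμdef]
    rw [← this]
  have hΦmono : ∀ a b, 0 ≤ a → a ≤ b → b < T → Φ a ≤ Φ b := by
    intro a b ha hab hbT
    rw [hΦsplit a b ha hab hbT]
    have : 0 ≤ ∫ s in a..b, G s :=
      intervalIntegral.integral_nonneg hab (fun u hu =>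
        hG0 u (le_trans ha hu.1) (lt_of_le_of_lt hu.2 hbT))
    nlinarith
  have hμmono : ∀ a b, 0 ≤ a → a ≤ b → b < T → μf a ≤ μf b := by
    intro a b ha hab hbT
    rw [hμsplit a b ha hab hbT]
    have : 0 ≤ ∫ s in a..b, g s :=
      intervalIntegral.integral_nonneg hab (fun u hu =>
        hg0 u ⟨le_trans ha hu.1, le_trans hu.2 hbT.le⟩)
    linarith
  have hΦcont : ∀ t, 0 ≤ t → t < T → ContinuousOn Φ (Icc 0 t) := by
    intro t ht0 htT
    have := intervalIntegral.continuousOn_primitive_interval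
      (μ := volume) (f := G) (a := 0) (b := t) (by rw [uIcc_of_le ht0]; exact hGint t ht0 htT)
    rw [uIcc_of_le ht0] at this
    exact (continuousOn_const.add (continuousOn_const.mul this))
  have hμcont : ∀ t, 0 ≤ t → t < T → ContinuousOn μf (Icc 0 t) := by
    intro t ht0 htT
    have := intervalIntegral.continuousOn_primitive_interval
      (μ := volume) (f := g) (a := 0) (b := t)
      (by rw [uIcc_of_le ht0]; exact hgint.mono_set (Icc_subset_Icc le_rfl htT.le))
    rw [uIcc_of_le ht0] at this
    exact this
  have hhleΦ : ∀ u ∈ Ico 0 T, h u ≤ Φ u := hineq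
  -- main induction
  intro n
  induction n with
  | zero =>
    intro t ht hS
    obtain ⟨ht0, htT⟩ := ht
    have hμ0 : (0:ℝ) ≤ μf t :=
      intervalIntegral.integral_nonneg ht0 (fun u hu => hg0 u ⟨hu.1, le_trans hu.2 htT.le⟩)
    have hμeq : μf t = 0 := le_antisymm (by simpa [Sm15] using hS) hμ0
    -- G ≤ M * g on [0,t]
    have hsub : Icc 0 t ⊆ Ico 0 T := fun x hx => ⟨hx.1, lt_of_le_of_lt hx.2 htT⟩
    have hwc : ContinuousOn (fun s => h s * Real.log (h s)) (Icc 0 t) := by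
      have h1 : ContinuousOn h (Icc 0 t) := hhc.mono hsub
      exact h1.mul (h1.log (fun x hx => by have := hh1 x (hsub hx); linarith))
    obtain ⟨M, hM⟩ := isCompact_Icc.exists_bound_of_continuousOn hwc
    have hint : (∫ s in (0:ℝ)..t, G s) ≤ ∫ s in (0:ℝ)..t, M * g s := by
      apply intervalIntegral.integral_mono_on ht0 (hGII 0 t le_rfl ht0 htT)
        ((hgII 0 t le_rfl ht0 htT.le).const_mul M)
      intro x hx
      have hgx := hg0 x ⟨hx.1, le_trans hx.2 htT.le⟩
      have hwx : h x * Real.log (h x) ≤ M := le_trans (le_abs_self _) (hM x hx)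
      calc G x = (h x * Real.log (h x)) * g x := by simp only [hGdef]; ring
        _ ≤ M * g x := mul_le_mul_of_nonneg_right hwx hgx
    rw [intervalIntegral.integral_const_mul] at hint
    have : (∫ s in (0:ℝ)..t, G s) ≤ 0 := by
      calc (∫ s in (0:ℝ)..t, G s) ≤ M * μf t := hint
        _ = 0 := by rw [hμeq]; ring
    have : C₁ * (∫ s in (0:ℝ)..t, G s) ≤ 0 := mul_nonpos_of_nonneg_of_nonpos hC0.le this
    calc C₁ + C₁ * (∫ s in (0:ℝ)..t, G s) ≤ C₁ + 0 := by linarith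
      _ ≤ 2 ^ (0 + 1) * C₁ := by norm_num; linarith
  | succ n IH =>
    intro t ht hS
    obtain ⟨ht0, htT⟩ := ht
    by_cases hcase : μf t ≤ Sm15 C₁ n
    · calc C₁ + C₁ * (∫ s in (0:ℝ)..t, G s) ≤ 2 ^ (n + 1) * C₁ := IH t ⟨ht0, htT⟩ hcase
        _ ≤ 2 ^ (n + 1 + 1) * C₁ := by
            have : (2:ℝ) ^ (n+1) ≤ 2 ^ (n+2) := by
              apply pow_le_pow_right₀ (by norm_num) (by omega)
            nlinarith
    push_neg at hcase
    have hμ00 : μf 0 = 0 := by simp [hμdef]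
    -- find a with μf a = Sm15 C₁ n
    have hSnn : 0 ≤ Sm15 C₁ n := Sm15_nonneg C₁ hC₁ n
    obtain ⟨a, ha_mem, ha⟩ : ∃ a ∈ Icc 0 t, μf a = Sm15 C₁ n := by
      have := intermediate_value_Icc ht0 (hμcont t ht0 htT)
      have hmem : Sm15 C₁ n ∈ Icc (μf 0) (μf t) := by
        rw [hμ00]; exact ⟨hSnn, hcase.le⟩
      obtain ⟨a, ha1, ha2⟩ := this hmem
      exact ⟨a, ha1, ha2⟩
    obtain ⟨ha0, hat⟩ := ha_mem
    set B : ℝ := 2 ^ (n + 1) * C₁ with hBdef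
    have hB2 : (2:ℝ) ≤ B := by
      have : (2:ℝ) ≤ 2 ^ (n+1) := le_self_pow₀ (by norm_num) (by omega)
      nlinarith
    have h2B : 2 * B = 2 ^ (n + 2) * C₁ := by rw [hBdef]; ring
    have hΦa : Φ a ≤ B := IH a ⟨ha0, lt_of_le_of_lt hat htT⟩ (le_of_eq ha)
    -- goal is Φ t ≤ 2 * B
    show Φ t ≤ 2 ^ (n + 1 + 1) * C₁
    rw [show (n+1+1) = n+2 from rfl, ← h2B]
    by_contra hcon
    push_neg at hcon
    obtain ⟨b, hb_mem, hΦb⟩ : ∃ b ∈ Icc a t, Φ b = 2 * B := by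
      have hsub : Icc a t ⊆ Icc 0 t := Icc_subset_Icc ha0 le_rfl
      have := intermediate_value_Icc hat ((hΦcont t ht0 htT).mono hsub)
      have hmem : 2 * B ∈ Icc (Φ a) (Φ t) := ⟨by linarith, hcon.le⟩
      obtain ⟨b, hb1, hb2⟩ := this hmem
      exact ⟨b, hb1, hb2⟩
    obtain ⟨hab, hbt⟩ := hb_mem
    have hb0 : 0 ≤ b := le_trans ha0 hab
    have hbT : b < T := lt_of_le_of_lt hbt htT
    have hlog2B : 0 < Real.log (2 * B) := by rw [h2B]; exact log_pow_pos C₁ hC₁ n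
    -- pointwise bound on [a,b]
    have hpt : ∀ x ∈ Icc a b, G x ≤ (2 * B * Real.log (2 * B)) * g x := by
      intro x hx
      have hx0 : 0 ≤ x := le_trans ha0 hx.1
      have hxT : x < T := lt_of_le_of_lt (le_trans hx.2 hbt) htT
      have hhx : 1 ≤ h x := hh1 x ⟨hx0, hxT⟩
      have hgx : 0 ≤ g x := hg0 x ⟨hx0, hxT.le⟩
      have hhΦ : h x ≤ Φ x := hhleΦ x ⟨hx0, hxT⟩
      have hΦx : Φ x ≤ Φ b := hΦmono x b hx0 hx.2 hbT
      have hh2B : h x ≤ 2 * B := by rw [← hΦb]; linarith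
      have hloghx : Real.log (h x) ≤ Real.log (2 * B) :=
        Real.log_le_log (by linarith) hh2B
      have hlognn : 0 ≤ Real.log (h x) := Real.log_nonneg hhx
      calc G x = (h x * Real.log (h x)) * g x := by simp only [hGdef]; ring
        _ ≤ (2 * B * Real.log (2 * B)) * g x := by
            apply mul_le_mul_of_nonneg_right _ hgx
            exact mul_le_mul hh2B hloghx hlognn (by linarith)
    have hintb : (∫ s in a..b, G s) ≤ (2 * B * Real.log (2 * B)) * ∫ s in a..b, g s := by
      rw [← intervalIntegral.integral_const_mul]
      exact intervalIntegral.integral_mono_on hab (hGII a b ha0 hab hbT)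
        ((hgII a b ha0 hab hbT.le).const_mul _) hpt
    have hμab : (∫ s in a..b, g s) ≤ dl15 C₁ n := by
      have h1 : μf b = μf a + ∫ s in a..b, g s := hμsplit a b ha0 hab hbT
      have h2 : μf b ≤ μf t := hμmono b t hb0 hbt htT
      have h3 : μf b ≤ Sm15 C₁ (n+1) := le_trans h2 hS
      have h4 : Sm15 C₁ (n+1) = Sm15 C₁ n + dl15 C₁ n := by
        simp [Sm15, Finset.sum_range_succ]
      rw [ha] at h1
      linarith
    have hgabnn : (0:ℝ) ≤ ∫ s in a..b, g s :=
      intervalIntegral.integral_nonneg hab (fun u hu =>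
        hg0 u ⟨le_trans ha0 hu.1, le_trans hu.2 hbT.le⟩)
    have hcoef : 0 ≤ 2 * B * Real.log (2 * B) := by positivity
    have hkey : C₁ * (2 * B * Real.log (2 * B) * dl15 C₁ n) = B / 2 := by
      have : dl15 C₁ n = 1 / (4 * C₁ * Real.log (2 * B)) := by
        rw [h2B]; rfl
      rw [this]
      field_simp
      ring
    have hΦbb : Φ b = Φ a + C₁ * ∫ s in a..b, G s := hΦsplit a b ha0 hab hbT
    have hfinal : Φ b ≤ B + B / 2 := by
      rw [hΦbb]
      have : C₁ * (∫ s in a..b, G s) ≤ B / 2 := by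
        calc C₁ * (∫ s in a..b, G s)
            ≤ C₁ * ((2 * B * Real.log (2 * B)) * ∫ s in a..b, g s) := by nlinarith
          _ ≤ C₁ * (2 * B * Real.log (2 * B) * dl15 C₁ n) := by
              have := mul_le_mul_of_nonneg_left hμab hcoef
              nlinarith
          _ = B / 2 := hkey
      linarith
    rw [hΦb] at hfinal
    linarith

set_option maxHeartbeats 1000000 in
lemma arith15 (C₁ : ℝ) (hC₁ : 1 ≤ C₁) (m : ℝ) (hm0 : 0 ≤ m) (n : ℕ)
    (hmin : ∀ j < n, ¬ m ≤ Sm15 C₁ j) :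
    (2:ℝ) ^ n ≤ Real.exp (Real.exp ((16 * C₁ * max (Real.log (4 * C₁)) 1 + 1) * m)) := by
  have hC0 : (0:ℝ) < C₁ := by linarith
  set Δ₀ : ℝ := 16 * C₁ * max (Real.log (4 * C₁)) 1 + 1 with hΔ
  have hMx : Real.log (4 * C₁) ≤ max (Real.log (4 * C₁)) 1 := le_max_left _ _
  have hMx1 : (1:ℝ) ≤ max (Real.log (4 * C₁)) 1 := le_max_right _ _
  have hΔpos : 0 < Δ₀ := by nlinarith
  set x : ℝ := Δ₀ * m with hx
  have hx0 : 0 ≤ x := mul_nonneg hΔpos.le hm0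
  match n with
  | 0 => calc (2:ℝ)^0 = 1 := by norm_num
           _ ≤ Real.exp (Real.exp x) := by
              rw [show (1:ℝ) = Real.exp 0 from (Real.exp_zero).symm]
              exact Real.exp_le_exp.mpr (Real.exp_pos x).le
  | 1 =>
    have h1 : Real.log 2 ≤ Real.exp x := by
      have := Real.log_two_lt_d9
      have h2 : (1:ℝ) ≤ Real.exp x := by
        rw [show (1:ℝ) = Real.exp 0 from (Real.exp_zero).symm]
        exact Real.exp_le_exp.mpr hx0
      linarith
    calc (2:ℝ)^1 = 2 := by norm_num
      _ = Real.exp (Real.log 2) := (Real.exp_log (by norm_num)).symm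
      _ ≤ Real.exp (Real.exp x) := Real.exp_le_exp.mpr h1
  | (k+2) =>
    have hlt : Sm15 C₁ (k+1) < m := not_le.mp (hmin (k+1) (by omega))
    have hL4 : 0 < Real.log (4 * C₁) := Real.log_pos (by linarith)
    have hL2 : 0 < Real.log (2 * C₁) := Real.log_pos (by linarith)
    set c : ℝ := 4 * C₁ * Real.log (2 * C₁) with hcdef
    have hc0 : 0 < c := by positivity
    -- (ii) x > 4
    have hdl0 : dl15 C₁ 0 = 1 / (4 * C₁ * Real.log (4 * C₁)) := by
      unfold dl15; norm_num
    have hmdl : dl15 C₁ 0 < m := by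
      have h1 : Sm15 C₁ 1 ≤ Sm15 C₁ (k+1) := Sm15_mono C₁ hC₁ (by omega)
      have h2 : Sm15 C₁ 1 = dl15 C₁ 0 := by simp [Sm15]
      linarith
    have hx4 : 4 < x := by
      have hden : 0 < 4 * C₁ * Real.log (4 * C₁) := by positivity
      have hΔbig : 16 * C₁ * Real.log (4 * C₁) ≤ Δ₀ := by nlinarith
      have h1 : 4 ≤ Δ₀ * dl15 C₁ 0 := by
        rw [hdl0, mul_one_div, le_div_iff₀ hden]
        nlinarith
      have h2 : Δ₀ * dl15 C₁ 0 < Δ₀ * m := mul_lt_mul_of_pos_left hmdl hΔpos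
      calc (4:ℝ) ≤ Δ₀ * dl15 C₁ 0 := h1
        _ < x := h2
    -- (i) k + 3 < 2 * exp (c * m)
    have hlog : Real.log ((k:ℝ) + 3) < Real.log 2 + c * m := by
      have h1 := Sm15_lb C₁ hC₁ (k+1)
      rw [show ((k+1:ℕ):ℝ) + 2 = (k:ℝ) + 3 by push_cast; ring] at h1
      have h3 : (Real.log ((k:ℝ)+3) - Real.log 2)/c < m := lt_of_le_of_lt h1 hlt
      rw [div_lt_iff₀ hc0] at h3
      nlinarith
    have hn1pos : (0:ℝ) < (k:ℝ) + 3 := by positivity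
    have hnlt : (k:ℝ) + 3 < 2 * Real.exp (c * m) := by
      have h := Real.exp_lt_exp.mpr hlog
      rw [Real.exp_log hn1pos, Real.exp_add, Real.exp_log (by norm_num : (0:ℝ) < 2)] at h
      exact h
    -- c * m ≤ x / 2
    have hcm : c * m ≤ x / 2 := by
      have hcle : c ≤ Δ₀ / 2 := by
        have hlog24 : Real.log (2 * C₁) ≤ Real.log (4 * C₁) :=
          Real.log_le_log (by linarith) (by linarith)
        have h4 : c ≤ 4 * C₁ * max (Real.log (4 * C₁)) 1 := by nlinarith
        nlinarith
      have h5 := mul_le_mul_of_nonneg_right hcle hm0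
      rw [hx]; nlinarith
    -- conclude
    have hnlog : ((k:ℝ) + 2) * Real.log 2 < Real.exp x := by
      have hl2 : Real.log 2 ≤ 1 := by have := Real.log_two_lt_d9; linarith
      have hl2p : 0 < Real.log 2 := Real.log_pos (by norm_num)
      have hk0 : (0:ℝ) ≤ (k:ℝ) := Nat.cast_nonneg k
      have h1 : ((k:ℝ) + 2) * Real.log 2 ≤ (k:ℝ) + 2 := by nlinarith
      have h2 : (k:ℝ) + 2 < 2 * Real.exp (x/2) := by
        have h6 := Real.exp_le_exp.mpr hcm
        nlinarith [Real.exp_pos (c*m)]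
      have h3 : 2 * Real.exp (x/2) ≤ Real.exp x := by
        have h7 : Real.exp x = Real.exp (x/2) * Real.exp (x/2) := by
          rw [← Real.exp_add]; norm_num
        have h8 : (2:ℝ) ≤ Real.exp (x/2) := by
          have h9 := Real.add_one_le_exp (x/2)
          linarith
        nlinarith [Real.exp_pos (x/2)]
      linarith
    have hpow : Real.log ((2:ℝ) ^ (k+2)) = ((k:ℝ)+2) * Real.log 2 := by
      rw [Real.log_pow]; push_cast; ring
    calc (2:ℝ)^(k+2) = Real.exp (Real.log ((2:ℝ)^(k+2))) :=
          (Real.exp_log (pow_pos (by norm_num) (k+2))).symm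
      _ = Real.exp (((k:ℝ)+2) * Real.log 2) := by rw [hpow]
      _ ≤ Real.exp (Real.exp x) := Real.exp_le_exp.mpr hnlog.le


lemma ex15 (C₁ : ℝ) (hC₁ : 1 ≤ C₁) (m : ℝ) (hm0 : 0 ≤ m) : ∃ n, m ≤ Sm15 C₁ n := by
  have hC0 : (0:ℝ) < C₁ := by linarith
  have hL2 : 0 < Real.log (2 * C₁) := Real.log_pos (by linarith)
  set c : ℝ := 4 * C₁ * Real.log (2 * C₁) with hcdef
  have hc0 : 0 < c := by positivity
  refine ⟨⌈2 * Real.exp (c * m)⌉₊, ?_⟩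
  have hN : 2 * Real.exp (c * m) ≤ (⌈2 * Real.exp (c * m)⌉₊ : ℝ) := Nat.le_ceil _
  set N := ⌈2 * Real.exp (c * m)⌉₊
  have hlb := Sm15_lb C₁ hC₁ N
  have h1 : Real.log 2 + c * m ≤ Real.log ((N:ℝ) + 2) := by
    have h2 : Real.log (2 * Real.exp (c * m)) = Real.log 2 + c * m := by
      rw [Real.log_mul (by norm_num) (Real.exp_ne_zero _), Real.log_exp]
    rw [← h2]
    apply Real.log_le_log (by positivity)
    linarith
  have h3 : m ≤ (Real.log ((N:ℝ) + 2) - Real.log 2) / c := by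
    rw [le_div_iff₀ hc0]
    nlinarith
  linarith

theorem stmt15 (C₁ : ℝ) (hC₁ : 0 < C₁) :
    ∃ Δ₀ > 0, ∀ (T : ℝ), 0 < T → ∀ (g h : ℝ → ℝ),
      (∀ s ∈ Set.Icc 0 T, 0 ≤ g s) →
      MeasureTheory.IntegrableOn g (Set.Icc 0 T) →
      ContinuousOn h (Set.Ico 0 T) →
      (∀ t ∈ Set.Ico 0 T, 1 ≤ h t) →
      (∀ t ∈ Set.Ico 0 T,
        h t ≤ C₁ + C₁ * ∫ s in (0:ℝ)..t, g s * h s * Real.log (h s)) →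
      ∀ t ∈ Set.Ico 0 T,
        h t ≤ 2 * C₁ * Real.exp (Real.exp (Δ₀ * ∫ s in (0:ℝ)..t, g s)) := by
  refine ⟨16 * C₁ * max (Real.log (4 * C₁)) 1 + 1, ?_, ?_⟩
  · have h1 : (1:ℝ) ≤ max (Real.log (4 * C₁)) 1 := le_max_right _ _
    nlinarith
  intro T hT g h hg0 hgint hhc hh1 hineq t ht
  by_cases hC : 1 ≤ C₁
  swap
  · exfalso
    have h0 : (0:ℝ) ∈ Ico (0:ℝ) T := ⟨le_rfl, hT⟩
    have h1 := hh1 0 h0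
    have h2 := hineq 0 h0
    rw [intervalIntegral.integral_same] at h2
    push_neg at hC
    nlinarith
  · have hC0 : (0:ℝ) < C₁ := hC₁
    have hm0 : (0:ℝ) ≤ ∫ s in (0:ℝ)..t, g s :=
      intervalIntegral.integral_nonneg ht.1 (fun u hu => hg0 u ⟨hu.1, le_trans hu.2 ht.2.le⟩)
    set m : ℝ := ∫ s in (0:ℝ)..t, g s with hm
    have hex : ∃ n, m ≤ Sm15 C₁ n := ex15 C₁ hC m hm0
    set n := Nat.find hex with hn
    have hspec : m ≤ Sm15 C₁ n := Nat.find_spec hex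
    have hmin : ∀ j < n, ¬ m ≤ Sm15 C₁ j := fun j hj => Nat.find_min hex hj
    have hkey := key15 C₁ T hC g h hg0 hgint hhc hh1 hineq n t ht hspec
    have harith := arith15 C₁ hC m hm0 n hmin
    have hht := hineq t ht
    have hpow : (2:ℝ) ^ (n + 1) = 2 * 2 ^ n := by ring
    have hexnn : (0:ℝ) < (2:ℝ)^n := pow_pos (by norm_num) n
    nlinarith [Real.exp_pos (Real.exp ((16 * C₁ * max (Real.log (4 * C₁)) 1 + 1) * m))]
end
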